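/- Let H be a Hermitian matrix with H = Σ_{P ∈ S_H} D_P P a PMR decomposition over a regular permutation group G (S_H the subset of G with D_P ≠ 0), and let P̃ ∈ G with P̃ ∉ ⟨S_H⟩ (the subgroup generated by the permutations appearing in H). Then for any diagonal matrix D̃, Tr[D̃ P̃ e^{−βH}] = 0 for all β. -/

import Mathlib

open Matrix

/-- Permutation matrix of `σ` in the column convention: `P_σ e_y = e_{σ y}`. -/
def permMatrix {d : ℕ} (σ : Equiv.Perm (Fin d)) : Matrix (Fin d) (Fin d) ℂ :=
  Matrix.of fun i j => if σ j = i then 1 else 0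

/-- Support of a matrix is contained in the relation given by a subgroup `K`. -/
def PermSupp {d : ℕ} (K : Subgroup (Equiv.Perm (Fin d)))
    (A : Matrix (Fin d) (Fin d) ℂ) : Prop :=
  ∀ i j : Fin d, (∀ σ ∈ K, σ j ≠ i) → A i j = 0

lemma PermSupp.one {d : ℕ} (K : Subgroup (Equiv.Perm (Fin d))) : PermSupp K 1 := by
  intro i j h
  by_contra hne
  have hij : i = j := by
    by_contra hij
    exact hne (Matrix.one_apply_ne hij)
  exact h 1 K.one_mem (by simp [hij])

lemma PermSupp.mul {d : ℕ} {K : Subgroup (Equiv.Perm (Fin d))}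
    {A B : Matrix (Fin d) (Fin d) ℂ} (hA : PermSupp K A) (hB : PermSupp K B) :
    PermSupp K (A * B) := by
  intro i j h
  rw [Matrix.mul_apply]
  apply Finset.sum_eq_zero
  intro k _
  by_cases hAk : A i k = 0
  · simp [hAk]
  by_cases hBk : B k j = 0
  · simp [hBk]
  exfalso
  have h1 : ¬ (∀ σ ∈ K, σ k ≠ i) := fun hc => hAk (hA i k hc)
  have h2 : ¬ (∀ σ ∈ K, σ j ≠ k) := fun hc => hBk (hB k j hc)
  push_neg at h1 h2
  obtain ⟨σ, hσK, hσ⟩ := h1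
  obtain ⟨τ, hτK, hτ⟩ := h2
  exact h (σ * τ) (K.mul_mem hσK hτK) (by simp [Equiv.Perm.mul_apply, hτ, hσ])

lemma PermSupp.pow {d : ℕ} {K : Subgroup (Equiv.Perm (Fin d))}
    {A : Matrix (Fin d) (Fin d) ℂ} (hA : PermSupp K A) (n : ℕ) : PermSupp K (A ^ n) := by
  induction n with
  | zero => simpa using PermSupp.one K
  | succ n ih => rw [pow_succ]; exact ih.mul hA

lemma PermSupp.smul {d : ℕ} {K : Subgroup (Equiv.Perm (Fin d))}
    {A : Matrix (Fin d) (Fin d) ℂ} (hA : PermSupp K A) (c : ℂ) : PermSupp K (c • A) := by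
  intro i j h
  simp [Matrix.smul_apply, hA i j h]

/-- Let `H` be Hermitian with PMR decomposition `H = Σ_{σ ∈ G} D_σ P_σ` over a regular
group `G`, and let `P̃ ∈ G` lie outside the subgroup generated by the permutations
appearing in `H` (those with `D_σ ≠ 0`). Then for any diagonal `D̃` and any `β`,
`Tr[D̃ P̃ e^{−βH}] = 0`. -/
theorem pmr_permutation_outside_closure_trace_zero
    (d : ℕ) (G : Subgroup (Equiv.Perm (Fin d))) [Fintype ↥G]
    (htrans : ∀ x y : Fin d, ∃ σ ∈ G, σ x = y)
    (hfree : ∀ σ ∈ G, σ ≠ 1 → ∀ x : Fin d, σ x ≠ x)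
    (D : G → Matrix (Fin d) (Fin d) ℂ) (hD : ∀ σ : G, (D σ).IsDiag)
    (H : Matrix (Fin d) (Fin d) ℂ)
    (hH : H = ∑ σ : G, D σ * permMatrix (σ : Equiv.Perm (Fin d)))
    (hHerm : H.IsHermitian)
    (Pt : G)
    (hPt : (Pt : Equiv.Perm (Fin d)) ∉
      Subgroup.closure {p : Equiv.Perm (Fin d) | ∃ σ : G, (σ : Equiv.Perm (Fin d)) = p ∧ D σ ≠ 0})
    (Dt : Matrix (Fin d) (Fin d) ℂ) (hDt : Dt.IsDiag) (β : ℂ) :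
    (Dt * permMatrix (Pt : Equiv.Perm (Fin d)) * NormedSpace.exp (-β • H)).trace = 0 := by
  classical
  set S : Set (Equiv.Perm (Fin d)) :=
    {p : Equiv.Perm (Fin d) | ∃ σ : G, (σ : Equiv.Perm (Fin d)) = p ∧ D σ ≠ 0} with hS
  set K : Subgroup (Equiv.Perm (Fin d)) := Subgroup.closure S with hK
  have hKG : K ≤ G := by
    rw [hK]
    apply Subgroup.closure_le _ |>.mpr
    rintro p ⟨σ, rfl, -⟩
    exact σ.2
  -- the trace functional vanishes on matrices supported on K
  have key : ∀ E : Matrix (Fin d) (Fin d) ℂ, PermSupp K E →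
      (Dt * permMatrix (Pt : Equiv.Perm (Fin d)) * E).trace = 0 := by
    intro E hE
    rw [Matrix.trace]
    apply Finset.sum_eq_zero
    intro i _
    rw [Matrix.diag_apply, Matrix.mul_apply]
    apply Finset.sum_eq_zero
    intro k _
    have hDtP : (Dt * permMatrix (Pt : Equiv.Perm (Fin d))) i k = Dt i ((Pt : Equiv.Perm (Fin d)) k) := by
      simp [Matrix.mul_apply, permMatrix]
    rw [hDtP]
    by_cases hik : i = (Pt : Equiv.Perm (Fin d)) k
    · -- need E k i = 0
      have hEk : E k i = 0 := by
        apply hE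
        intro σ hσK hσ
        -- σ i = k, i.e., σ (Pt k) = k; so (Pt σ) (Pt k) = Pt k
        have hPtσ : ((Pt : Equiv.Perm (Fin d)) * σ) ∈ G := G.mul_mem Pt.2 (hKG hσK)
        have hfix : ((Pt : Equiv.Perm (Fin d)) * σ) i = i := by
          simp [Equiv.Perm.mul_apply, hσ, ← hik]
        have hone : (Pt : Equiv.Perm (Fin d)) * σ = 1 := by
          by_contra hne
          exact hfree _ hPtσ hne i hfix
        have : (Pt : Equiv.Perm (Fin d)) = σ⁻¹ := by
          rw [mul_eq_one_iff_eq_inv] at hone; exact hone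
        exact hPt (this ▸ K.inv_mem hσK)
      simp [hEk]
    · have : Dt i ((Pt : Equiv.Perm (Fin d)) k) = 0 := hDt hik
      simp [this]
  -- H is supported on K
  have hHs : PermSupp K H := by
    intro i j h
    rw [hH, Matrix.sum_apply]
    apply Finset.sum_eq_zero
    intro σ _
    have : (D σ * permMatrix (σ : Equiv.Perm (Fin d))) i j
        = D σ i ((σ : Equiv.Perm (Fin d)) j) := by
      simp [Matrix.mul_apply, permMatrix]
    rw [this]
    by_cases hDσ : D σ = 0
    · simp [hDσ]
    by_cases hij : i = (σ : Equiv.Perm (Fin d)) j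
    · exfalso
      apply h (σ : Equiv.Perm (Fin d)) _ hij.symm
      exact Subgroup.subset_closure ⟨σ, rfl, hDσ⟩
    · exact hD σ hij
  have hXs : PermSupp K (-β • H) := hHs.smul (-β)
  -- linear functional
  let L : Matrix (Fin d) (Fin d) ℂ →ₗ[ℂ] ℂ :=
    { toFun := fun E => (Dt * permMatrix (Pt : Equiv.Perm (Fin d)) * E).trace
      map_add' := fun x y => by simp [Matrix.mul_add]
      map_smul' := fun c x => by simp [Matrix.mul_smul] }
  have hL : Continuous L := L.continuous_of_finiteDimensional
  rw [NormedSpace.exp_eq_tsum ℂ]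
  show L (∑' n : ℕ, ((n.factorial : ℂ)⁻¹) • (-β • H) ^ n) = 0
  by_cases hsum : Summable fun n : ℕ => ((n.factorial : ℂ)⁻¹) • (-β • H) ^ n
  · have := hsum.hasSum
    have h2 : HasSum (fun n : ℕ => L (((n.factorial : ℂ)⁻¹) • (-β • H) ^ n))
        (L (∑' n : ℕ, ((n.factorial : ℂ)⁻¹) • (-β • H) ^ n)) :=
      this.map L hL
    have hz : ∀ n : ℕ, L (((n.factorial : ℂ)⁻¹) • (-β • H) ^ n) = 0 := by
      intro n
      rw [L.map_smul]
      have h0 : L ((-β • H) ^ n) = 0 := key _ (hXs.pow n)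
      rw [h0, smul_zero]
    rw [funext hz] at h2
    exact h2.unique hasSum_zero
  · rw [tsum_eq_zero_of_not_summable hsum]
    simpa using L.map_zero
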